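/- Let S = R[T_1,...,T_n] be a polynomial ring over a Noetherian ring R and let J, L, Y be ideals of S with L ⊆ J, where Y = (Y_1,...,Y_{e-1}) is generated by a sequence that is regular modulo J. If J + Y = L + Y, then J = L. -/

import Mathlib

set_option synthInstance.maxHeartbeats 1000000
set_option maxHeartbeats 2000000

open Order MvPolynomial

/-- The height of an ideal: the infimum of heights of primes containing it. -/
noncomputable def idealHeight {R : Type*} [CommRing R] (I : Ideal R) : ℕ∞ :=
  ⨅ (p : PrimeSpectrum R) (_ : I ≤ p.asIdeal), Order.height p

/-- The ideal of `t × t` minors of a matrix. -/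
noncomputable def minorsIdeal {R : Type*} [CommRing R] {m n : ℕ} (t : ℕ)
    (M : Matrix (Fin m) (Fin n) R) : Ideal R :=
  Ideal.span {x | ∃ (r : Fin t → Fin m) (c : Fin t → Fin n),
    Function.Injective r ∧ Function.Injective c ∧ x = (M.submatrix r c).det}

/-- The minimal number of generators of a module. -/
noncomputable def mu (R M : Type*) [CommRing R] [AddCommGroup M] [Module R M] : ℕ :=
  sInf {k : ℕ | ∃ f : Fin k → M, Submodule.span R (Set.range f) = ⊤}

/-- The `G_s` condition for a module of rank `e` presented by an `n × m` matrix `φ`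
(so that `Fitt_i = I_{n-i}(φ)`), expressed via heights of Fitting ideals:
`ht Fitt_i ≥ i - e + 2` for all `e ≤ i ≤ s + e - 2`. -/
def moduleG {R : Type*} [CommRing R] {n m : ℕ} (φ : Matrix (Fin n) (Fin m) R)
    (e s : ℕ) : Prop :=
  ∀ i : ℕ, e ≤ i → i ≤ s + e - 2 →
    ((i - e + 2 : ℕ) : ℕ∞) ≤ idealHeight (minorsIdeal (n - i) φ)

/-- Existence of a regular sequence of length `k` inside the ideal `I`. -/
def hasRegSeq (R : Type*) [CommRing R] (I : Ideal R) (k : ℕ) : Prop :=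
  ∃ rs : List R, rs.length = k ∧ (∀ r ∈ rs, r ∈ I) ∧ RingTheory.Sequence.IsRegular R rs

/-- A local ring is Cohen-Macaulay if its maximal ideal contains a regular sequence of
length `k` for every natural number `k` below the Krull dimension (depth = dimension). -/
def IsCMLocalRing (R : Type*) [CommRing R] [IsLocalRing R] : Prop :=
  ∀ k : ℕ, ((k : ℕ∞) : WithBot ℕ∞) ≤ ringKrullDim R →
    hasRegSeq R (IsLocalRing.maximalIdeal R) k

/-- A ring is Cohen-Macaulay if all its localizations at primes are Cohen-Macaulay. -/
def IsCMRing (R : Type*) [CommRing R] : Prop :=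
  ∀ p : PrimeSpectrum R, IsCMLocalRing (Localization.AtPrime p.asIdeal)


section AuxHomog

variable {σ R : Type*} [CommRing R]

/-- Component of a product with a homogeneous polynomial on the left. -/
lemma aux_hc_mul_homog {p : MvPolynomial σ R} {m : ℕ} (hp : p.IsHomogeneous m)
    (x : MvPolynomial σ R) (d : ℕ) :
    homogeneousComponent (m + d) (p * x) = p * homogeneousComponent d x := by
  classical
  conv_lhs => rw [← sum_homogeneousComponent x, Finset.mul_sum, map_sum]
  have hterm : ∀ i, homogeneousComponent (m + d) (p * homogeneousComponent i x) =
      if d = i then p * homogeneousComponent i x else 0 := by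
    intro i
    have hmem : p * homogeneousComponent i x ∈ homogeneousSubmodule σ R (m + i) :=
      (mem_homogeneousSubmodule _ _).2 (hp.mul (homogeneousComponent_isHomogeneous i x))
    rw [homogeneousComponent_of_mem hmem]
    by_cases h : d = i <;> simp [h]
  simp_rw [hterm]
  rw [Finset.sum_ite_eq]
  by_cases h : d ∈ Finset.range (x.totalDegree + 1)
  · simp [h]
  · have : homogeneousComponent d x = 0 := by
      apply homogeneousComponent_eq_zero
      simpa [Nat.lt_succ_iff, not_le] using fun hh => h (Finset.mem_range.mpr (Nat.lt_succ_of_le hh))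
    simp [h, this]

lemma aux_hc_mul_homog_lt {p : MvPolynomial σ R} {m : ℕ} (hp : p.IsHomogeneous m)
    (x : MvPolynomial σ R) {d : ℕ} (hd : d < m) :
    homogeneousComponent d (p * x) = 0 := by
  classical
  conv_lhs => rw [← sum_homogeneousComponent x, Finset.mul_sum, map_sum]
  apply Finset.sum_eq_zero
  intro i _
  have hmem : p * homogeneousComponent i x ∈ homogeneousSubmodule σ R (m + i) :=
    (mem_homogeneousSubmodule _ _).2 (hp.mul (homogeneousComponent_isHomogeneous i x))
  rw [homogeneousComponent_of_mem hmem, if_neg]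
  omega

/-- Components of an element of an ideal generated by homogeneous elements stay in the ideal. -/
lemma aux_comp_mem {G : Set (MvPolynomial σ R)}
    (hG : ∀ g ∈ G, ∃ t, g.IsHomogeneous t)
    {x : MvPolynomial σ R} (hx : x ∈ Ideal.span G) (d : ℕ) :
    homogeneousComponent d x ∈ Ideal.span G := by
  classical
  induction hx using Submodule.span_induction generalizing d with
  | mem g hg =>
      obtain ⟨t, ht⟩ := hG g hg
      rw [homogeneousComponent_of_mem ((mem_homogeneousSubmodule _ _).2 ht)]
      split
      · exact Ideal.subset_span hg
      · exact zero_mem _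
  | zero => simp
  | add a b _ _ iha ihb => rw [map_add]; exact add_mem (iha d) (ihb d)
  | smul a x hx ihx =>
      rw [smul_eq_mul, ← sum_homogeneousComponent a, Finset.sum_mul, map_sum]
      apply Ideal.sum_mem
      intro i _
      rcases le_or_gt i d with h | h
      · obtain ⟨k, rfl⟩ := Nat.exists_eq_add_of_le h
        rw [aux_hc_mul_homog (homogeneousComponent_isHomogeneous i a) x k]
        exact Ideal.mul_mem_left _ _ (ihx k)
      · rw [aux_hc_mul_homog_lt (homogeneousComponent_isHomogeneous i a) x h]
        exact zero_mem _

end AuxHomog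

section AuxReg

variable {A : Type*} [CommRing A]

open Pointwise in
lemma aux_smul_top_eq (J : Ideal A) (y : A) :
    (y • ⊤ : Submodule A (A ⧸ J)) = Submodule.map J.mkQ (Submodule.span A {y}) := by
  rw [Submodule.map_span, Set.image_singleton]
  ext x
  rw [← SetLike.mem_coe, Submodule.coe_pointwise_smul, Set.mem_smul_set,
    Submodule.mem_span_singleton]
  constructor
  · rintro ⟨m, -, rfl⟩
    obtain ⟨a, rfl⟩ := Submodule.mkQ_surjective J m
    refine ⟨a, ?_⟩
    rw [← map_smul, ← map_smul, smul_eq_mul, smul_eq_mul, mul_comm]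
  · rintro ⟨a, rfl⟩
    refine ⟨J.mkQ a, trivial, ?_⟩
    rw [← map_smul, ← map_smul, smul_eq_mul, smul_eq_mul, mul_comm]

/-- The quotient of `A ⧸ J` by `y • ⊤` is `A ⧸ (J ⊔ (y))`. -/
noncomputable def auxQuotEquiv (J : Ideal A) (y : A) :
    QuotSMulTop y (A ⧸ J) ≃ₗ[A] A ⧸ (J ⊔ Ideal.span {y}) :=
  (Submodule.quotEquivOfEq _ _ (aux_smul_top_eq J y)) ≪≫ₗ
    Submodule.quotientQuotientEquivQuotientSup J (Ideal.span {y})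

lemma aux_regStep (J : Ideal A) (y : A) (ys : List A)
    (h : RingTheory.Sequence.IsWeaklyRegular (A ⧸ J) (y :: ys)) :
    (∀ a, y * a ∈ J → a ∈ J) ∧
      RingTheory.Sequence.IsWeaklyRegular (A ⧸ (J ⊔ Ideal.span {y})) ys := by
  rw [RingTheory.Sequence.isWeaklyRegular_cons_iff] at h
  obtain ⟨h1, h2⟩ := h
  refine ⟨?_, ((auxQuotEquiv J y).isWeaklyRegular_congr ys).mp h2⟩
  intro a ha
  have h0 : (Submodule.Quotient.mk (y * a) : A ⧸ J) = 0 :=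
    (Submodule.Quotient.mk_eq_zero J).mpr ha
  rw [← smul_eq_mul, Submodule.Quotient.mk_smul] at h0
  have : (Submodule.Quotient.mk a : A ⧸ J) = 0 := h1 (by simpa using h0)
  exact (Submodule.Quotient.mk_eq_zero J).mp this

end AuxReg

section AuxMain

variable {σ R : Type*} [CommRing R]

/-- An ideal generated by homogeneous elements. -/
def AuxHomogGen (I : Ideal (MvPolynomial σ R)) : Prop :=
  ∃ G : Set (MvPolynomial σ R), (∀ g ∈ G, ∃ t, g.IsHomogeneous t) ∧ I = Ideal.span G

lemma AuxHomogGen.comp_mem {I : Ideal (MvPolynomial σ R)} (hI : AuxHomogGen I)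
    {x : MvPolynomial σ R} (hx : x ∈ I) (d : ℕ) : homogeneousComponent d x ∈ I := by
  obtain ⟨G, hG, rfl⟩ := hI
  exact aux_comp_mem hG hx d

lemma AuxHomogGen.sup_span {I : Ideal (MvPolynomial σ R)} (hI : AuxHomogGen I)
    {y : MvPolynomial σ R} (hy : y.IsHomogeneous 1) :
    AuxHomogGen (I ⊔ Ideal.span {y}) := by
  obtain ⟨G, hG, rfl⟩ := hI
  refine ⟨G ∪ {y}, ?_, by rw [Ideal.span_union]⟩
  rintro g (hg | rfl)
  · exact hG g hg
  · exact ⟨1, hy⟩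

/-- The single-element Nakayama step. -/
lemma aux_single {J L : Ideal (MvPolynomial σ R)} (hLJ : L ≤ J)
    {y : MvPolynomial σ R} (hy : y.IsHomogeneous 1)
    (hJg : AuxHomogGen J) (hLg : AuxHomogGen L)
    (hreg : ∀ a, y * a ∈ J → a ∈ J)
    (heq : J ⊔ Ideal.span {y} = L ⊔ Ideal.span {y}) : J = L := by
  have key : ∀ d : ℕ, ∀ x ∈ J, x.IsHomogeneous d → x ∈ L := by
    intro d
    induction d using Nat.strong_induction_on with
    | _ d ih =>
      intro x hxJ hxh
      have hx' : x ∈ L ⊔ Ideal.span {y} := heq ▸ Ideal.mem_sup_left hxJ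
      rw [Submodule.mem_sup] at hx'
      obtain ⟨l, hl, z, hz, hlz⟩ := hx'
      rw [Ideal.mem_span_singleton] at hz
      obtain ⟨s, rfl⟩ := hz
      have hxc : x = homogeneousComponent d l + homogeneousComponent d (y * s) := by
        have := congrArg (homogeneousComponent d) hlz
        rw [map_add, homogeneousComponent_of_mem ((mem_homogeneousSubmodule _ _).2 hxh),
          if_pos rfl] at this
        exact this.symm
      have hld : homogeneousComponent d l ∈ L := hLg.comp_mem hl d
      cases d with
      | zero =>
          rw [aux_hc_mul_homog_lt hy s Nat.zero_lt_one, add_zero] at hxc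
          exact hxc ▸ hld
      | succ k =>
          have hk : homogeneousComponent (k + 1) (y * s)
              = y * homogeneousComponent k s := by
            have := aux_hc_mul_homog hy s k
            rwa [show 1 + k = k + 1 from Nat.add_comm 1 k] at this
          rw [hk] at hxc
          have hysJ : y * homogeneousComponent k s ∈ J := by
            have h' : x - homogeneousComponent (k + 1) l = y * homogeneousComponent k s := by
              rw [hxc, add_sub_cancel_left]
            rw [← h']
            exact sub_mem hxJ (hLJ hld)
          have hsJ : homogeneousComponent k s ∈ J := hreg _ hysJ
          have hsL : homogeneousComponent k s ∈ L :=
            ih k (Nat.lt_succ_self k) _ hsJ (homogeneousComponent_isHomogeneous k s)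
          rw [hxc]
          exact add_mem hld (Ideal.mul_mem_left _ y hsL)
  refine le_antisymm ?_ hLJ
  obtain ⟨G, hG, rfl⟩ := hJg
  rw [Ideal.span_le]
  intro g hg
  obtain ⟨t, ht⟩ := hG g hg
  exact key t g (Ideal.subset_span hg) ht

/-- The main induction over the regular sequence. -/
lemma aux_main (ys : List (MvPolynomial σ R)) :
    ∀ (J L : Ideal (MvPolynomial σ R)), L ≤ J →
      (∀ y ∈ ys, y.IsHomogeneous 1) → AuxHomogGen J → AuxHomogGen L →
      RingTheory.Sequence.IsWeaklyRegular (MvPolynomial σ R ⧸ J) ys →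
      J ⊔ Ideal.ofList ys = L ⊔ Ideal.ofList ys → J = L := by
  induction ys with
  | nil => intro J L hLJ _ _ _ _ heq; simpa using heq
  | cons y ys ih =>
    intro J L hLJ hys hJg hLg hreg heq
    obtain ⟨hnzd, hreg'⟩ := aux_regStep J y ys hreg
    have hy : y.IsHomogeneous 1 := hys y List.mem_cons_self
    have hstep : J ⊔ Ideal.span {y} = L ⊔ Ideal.span {y} := by
      refine ih (J ⊔ Ideal.span {y}) (L ⊔ Ideal.span {y}) (sup_le_sup_right hLJ _)
        (fun z hz => hys z (List.mem_cons_of_mem y hz))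
        (hJg.sup_span hy) (hLg.sup_span hy) hreg' ?_
      rw [Ideal.ofList_cons, ← sup_assoc, ← sup_assoc] at heq
      exact heq
    exact aux_single hLJ hy hJg hLg hnzd hstep

end AuxMain

/-- Nakayama-type argument: in `S = R[T_1, …, T_n]`, if `L ⊆ J` are ideals
generated in positive `T`-degrees, `Y_1, …, Y_{e-1}` are linear forms in the `T`-variables
forming a regular sequence modulo `J`, and `J + (Y) = L + (Y)`, then `J = L`. -/
theorem stmt_13 {R : Type*} [CommRing R] [IsNoetherianRing R] (n e : ℕ)
    (J L : Ideal (MvPolynomial (Fin n) R)) (hLJ : L ≤ J)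
    (Y : Fin (e - 1) → MvPolynomial (Fin n) R)
    (hY : ∀ i, (Y i).IsHomogeneous 1)
    -- `L` and `J` are generated by homogeneous elements of positive `T`-degree:
    (hLhom : ∃ G : Set (MvPolynomial (Fin n) R),
      (∀ g ∈ G, ∃ t, 0 < t ∧ MvPolynomial.IsHomogeneous g t) ∧ L = Ideal.span G)
    (hJhom : ∃ G : Set (MvPolynomial (Fin n) R),
      (∀ g ∈ G, ∃ t, 0 < t ∧ MvPolynomial.IsHomogeneous g t) ∧ J = Ideal.span G)
    -- `Y_1, …, Y_{e-1}` is a regular sequence modulo `J`: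
    (hreg : RingTheory.Sequence.IsRegular (MvPolynomial (Fin n) R ⧸ J) (List.ofFn Y))
    (heq : J ⊔ Ideal.span (Set.range Y) = L ⊔ Ideal.span (Set.range Y)) :
    J = L := by
  obtain ⟨Gl, hGl, hLspan⟩ := hLhom
  obtain ⟨Gj, hGj, hJspan⟩ := hJhom
  have hofList : Ideal.ofList (List.ofFn Y) = Ideal.span (Set.range Y) :=
    congrArg Ideal.span (Set.ext fun a => by simp [List.mem_ofFn, eq_comm])
  refine aux_main (List.ofFn Y) J L hLJ ?_
    ⟨Gj, fun g hg => (hGj g hg).imp (fun t ht => ht.2), hJspan⟩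
    ⟨Gl, fun g hg => (hGl g hg).imp (fun t ht => ht.2), hLspan⟩
    hreg.toIsWeaklyRegular ?_
  · intro y hy
    obtain ⟨i, rfl⟩ := List.mem_ofFn.1 hy
    exact hY i
  · rw [hofList]
    exact heq
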